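/- Let (M, 𝓑) be a measurable space with a finite measure μ, let α > 0, and let φ : M → ℝ be bounded measurable. Then ∑_{n=0}^∞ (E_α^{(n)}(−μ(M)) / n!) · ∫_{M^n} e^{i(φ(x_1) + ⋯ + φ(x_n))} dμ^{⊗n}(x_1, …, x_n) = E_α( ∫_M (e^{iφ(x)} − 1) dμ(x) ); that is, the characteristic functional of the fractional Poisson measure ∑_n (E_α^{(n)}(−μ(M))/n!) μ^{(n)} on finite configurations equals E_α(∫(e^{iφ}−1)dμ). -/

import Mathlib

open MeasureTheory Complex
open scoped ENNReal

/-- The Mittag-Leffler function `E_α(z) = ∑ₙ zⁿ / Γ(αn+1)`. -/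
noncomputable def mittagLeffler (α : ℝ) (z : ℂ) : ℂ :=
  ∑' n : ℕ, z ^ n / (Real.Gamma (α * n + 1) : ℂ)

lemma ml_gamma_pos {α : ℝ} (hα : 0 < α) (n : ℕ) : 0 < Real.Gamma (α * n + 1) :=
  Real.Gamma_pos_of_pos (by positivity)

/-- Superexponential decay: `r^n / Γ(αn+1)` is summable for every `r ≥ 0`. -/
lemma ml_summable {α : ℝ} (hα : 0 < α) (r : ℝ) (hr : 0 ≤ r) :
    Summable (fun n : ℕ => r ^ n / Real.Gamma (α * n + 1)) := by
  obtain ⟨K, hK⟩ : ∃ K : ℕ, 2 * r + 2 ≤ ((K : ℝ) + 1) ^ α := by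
    have h2 : Filter.Tendsto (fun K : ℕ => ((K : ℝ) + 1) ^ α) Filter.atTop Filter.atTop :=
      (tendsto_rpow_atTop hα).comp
        (Filter.tendsto_atTop_add_const_right _ 1 tendsto_natCast_atTop_atTop)
    exact (h2.eventually_ge_atTop (2 * r + 2)).exists
  have hKpos : (0 : ℝ) < (K : ℝ) + 1 := by positivity
  set C : ℝ := ((K : ℝ) + 1) ^ (K + 1 : ℕ) with hC
  have hCpos : 0 < C := by positivity
  apply summable_of_isBigO_nat (g := fun n => (1 / 2 : ℝ) ^ n)
    (summable_geometric_of_lt_one (by norm_num) (by norm_num))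
  rw [Asymptotics.isBigO_iff]
  refine ⟨C, ?_⟩
  filter_upwards [Filter.eventually_ge_atTop ⌈((K : ℝ) + 1) / α⌉₊] with n hn
  have hαn : (K : ℝ) + 1 ≤ α * n := by
    have h1 : ((K : ℝ) + 1) / α ≤ (n : ℝ) := (Nat.ceil_le.mp hn).trans (le_refl _)
    calc (K : ℝ) + 1 = ((K : ℝ) + 1) / α * α := by field_simp
      _ ≤ (n : ℝ) * α := by exact mul_le_mul_of_nonneg_right h1 hα.le
      _ = α * n := mul_comm _ _
  set m : ℕ := ⌊α * n⌋₊ with hm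
  have hKm : K + 1 ≤ m := by rw [hm]; exact Nat.le_floor (by exact_mod_cast hαn)
  have hαn0 : (0 : ℝ) ≤ α * n := by positivity
  -- Γ(αn+1) ≥ m!
  have hmono : (Nat.factorial m : ℝ) ≤ Real.Gamma (α * n + 1) := by
    have h1 : ((m : ℝ) + 1) ≤ α * n + 1 := by
      have := Nat.floor_le hαn0; linarith
    have hm2 : (2 : ℝ) ≤ (m : ℝ) + 1 := by
      have : (1 : ℕ) ≤ m := le_trans (Nat.le_add_left 1 K) hKm
      have : (1 : ℝ) ≤ (m : ℝ) := by exact_mod_cast this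
      linarith
    have := Real.Gamma_strictMonoOn_Ici.monotoneOn (Set.mem_Ici.mpr hm2)
      (Set.mem_Ici.mpr (hm2.trans h1)) h1
    calc (Nat.factorial m : ℝ) = Real.Gamma ((m : ℝ) + 1) := (Real.Gamma_nat_eq_factorial m).symm
      _ ≤ Real.Gamma (α * n + 1) := this
  -- m! ≥ (K+1)^(m-K)
  have hfac : (((K : ℝ) + 1) ^ (m - K : ℕ)) ≤ (Nat.factorial m : ℝ) := by
    have h1 : (K + 1) ^ (m - K) ≤ (Nat.factorial K) * (K + 1) ^ (m - K) :=
      Nat.le_mul_of_pos_left _ (Nat.factorial_pos K)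
    have h2 : (Nat.factorial K) * (K + 1) ^ (m - K) ≤ Nat.factorial (K + (m - K)) := Nat.factorial_mul_pow_le_factorial
    have h3 : K + (m - K) = m := Nat.add_sub_cancel' (le_trans (Nat.le_succ K) hKm)
    have := (h1.trans h2).trans_eq (by rw [h3])
    exact_mod_cast this
  -- (K+1)^(m-K) ≥ (K+1)^(αn - (K+1)) = ((K+1)^α)^n / C
  have hexp : (((K : ℝ) + 1) ^ α) ^ n / C ≤ ((K : ℝ) + 1) ^ (m - K : ℕ) := by
    have hle : α * n - ((K : ℝ) + 1) ≤ ((m - K : ℕ) : ℝ) := by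
      have h1 : ((m - K : ℕ) : ℝ) = (m : ℝ) - K := by
        rw [Nat.cast_sub (le_trans (Nat.le_succ K) hKm)]
      have h2 : α * n < (m : ℝ) + 1 := Nat.lt_floor_add_one _
      rw [h1]; linarith
    have h3 : ((K : ℝ) + 1) ^ (α * n - ((K : ℝ) + 1)) ≤ ((K : ℝ) + 1) ^ (((m - K : ℕ) : ℝ)) :=
      Real.rpow_le_rpow_of_exponent_le (by linarith) hle
    rw [Real.rpow_natCast] at h3
    refine le_trans (le_of_eq ?_) h3
    rw [Real.rpow_sub hKpos, hC]
    congr 1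
    · rw [Real.rpow_mul hKpos.le, Real.rpow_natCast]
    · rw [← Real.rpow_natCast ((K : ℝ) + 1) (K + 1)]
      norm_num
  have hΓpos := ml_gamma_pos hα n
  have hlow : (((K : ℝ) + 1) ^ α) ^ n / C ≤ Real.Gamma (α * n + 1) :=
    (hexp.trans hfac).trans hmono
  have hlowpos : (0 : ℝ) < (((K : ℝ) + 1) ^ α) ^ n / C := by
    have : (0 : ℝ) < ((K : ℝ) + 1) ^ α := Real.rpow_pos_of_pos hKpos α
    positivity
  have hbound : r ^ n / Real.Gamma (α * n + 1) ≤ C * (1 / 2 : ℝ) ^ n := by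
    have h1 : r ^ n / Real.Gamma (α * n + 1) ≤ r ^ n / ((((K : ℝ) + 1) ^ α) ^ n / C) :=
      div_le_div_of_nonneg_left (pow_nonneg hr n) hlowpos hlow
    have hBpos : (0 : ℝ) < ((K : ℝ) + 1) ^ α := Real.rpow_pos_of_pos hKpos α
    have h2 : r ^ n / ((((K : ℝ) + 1) ^ α) ^ n / C) = C * (r / ((K : ℝ) + 1) ^ α) ^ n := by
      rw [div_pow]; field_simp
    have h3 : r / ((K : ℝ) + 1) ^ α ≤ 1 / 2 := by
      rw [div_le_div_iff₀ hBpos (by norm_num)]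
      linarith
    have h4 : (r / ((K : ℝ) + 1) ^ α) ^ n ≤ (1 / 2 : ℝ) ^ n :=
      pow_le_pow_left₀ (by positivity) h3 n
    calc r ^ n / Real.Gamma (α * n + 1) ≤ C * (r / ((K : ℝ) + 1) ^ α) ^ n := h1.trans_eq h2
      _ ≤ C * (1 / 2 : ℝ) ^ n := by nlinarith
  have hnn : (0 : ℝ) ≤ r ^ n / Real.Gamma (α * n + 1) := by positivity
  rw [Real.norm_of_nonneg hnn, Real.norm_of_nonneg (by positivity)]
  exact hbound

/-- The coefficient sequence of the Mittag-Leffler function. -/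
noncomputable def mlCoeff (α : ℝ) : ℕ → ℂ := fun n => 1 / (Real.Gamma (α * n + 1) : ℂ)

lemma ml_radius_top {α : ℝ} (hα : 0 < α) :
    (FormalMultilinearSeries.ofScalars ℂ (mlCoeff α)).radius = ⊤ := by
  apply FormalMultilinearSeries.radius_eq_top_of_summable_norm
  intro r
  have h := (ml_summable hα r r.coe_nonneg)
  refine h.congr fun n => ?_
  rw [FormalMultilinearSeries.ofScalars_norm]
  have hΓ := ml_gamma_pos hα n
  simp only [mlCoeff, norm_div, norm_one, Complex.norm_real, Real.norm_eq_abs,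
    abs_of_pos hΓ]
  rw [div_eq_mul_inv]
  ring

lemma ml_eq_sum (α : ℝ) :
    mittagLeffler α = (FormalMultilinearSeries.ofScalars ℂ (mlCoeff α)).sum := by
  funext z
  rw [mittagLeffler, FormalMultilinearSeries.sum]
  refine tsum_congr fun n => ?_
  rw [FormalMultilinearSeries.ofScalars_apply_eq, mlCoeff, smul_eq_mul]
  ring

lemma ml_differentiable {α : ℝ} (hα : 0 < α) : Differentiable ℂ (mittagLeffler α) := by
  intro z
  have hb : HasFPowerSeriesOnBall (FormalMultilinearSeries.ofScalars ℂ (mlCoeff α)).sum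
      (FormalMultilinearSeries.ofScalars ℂ (mlCoeff α)) 0
      (FormalMultilinearSeries.ofScalars ℂ (mlCoeff α)).radius :=
    FormalMultilinearSeries.hasFPowerSeriesOnBall _ (by rw [ml_radius_top hα]; exact
      ENNReal.zero_lt_top)
  have hz : z ∈ EMetric.ball (0 : ℂ) (FormalMultilinearSeries.ofScalars ℂ (mlCoeff α)).radius := by
    rw [ml_radius_top hα]; exact EMetric.mem_ball.mpr (edist_lt_top z 0)
  have := (hb.analyticAt_of_mem hz).differentiableAt
  rw [ml_eq_sum α]
  exact this

/-- For a finite measure `μ` and a bounded measurable `φ : M → ℝ`, the characteristic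
functional of the fractional Poisson measure `∑ₙ (E_α⁽ⁿ⁾(−μ(M))/n!) μ⁽ⁿ⁾` equals
`E_α(∫ (e^{iφ} − 1) dμ)`:
`∑ₙ (E_α⁽ⁿ⁾(−μ(M))/n!) ∫ e^{i(φ(x₁)+⋯+φ(xₙ))} dμ^{⊗n} = E_α(∫ (e^{iφ(x)} − 1) dμ(x))`. -/
theorem fractional_poisson_characteristic_functional
    {M : Type*} [MeasurableSpace M] (μ : Measure M) [IsFiniteMeasure μ]
    (α : ℝ) (hα : 0 < α)
    (φ : M → ℝ) (hφm : Measurable φ) (hφb : ∃ C : ℝ, ∀ x, |φ x| ≤ C) :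
    HasSum
      (fun n : ℕ =>
        iteratedDeriv n (mittagLeffler α) (-((μ Set.univ).toReal : ℂ)) /
            (Nat.factorial n : ℂ) *
          ∫ x : Fin n → M, Complex.exp (Complex.I * ∑ k, (φ (x k) : ℂ))
            ∂(Measure.pi fun _ : Fin n => μ))
      (mittagLeffler α (∫ x, (Complex.exp (Complex.I * (φ x : ℂ)) - 1) ∂μ)) := by
  set m : ℂ := ((μ Set.univ).toReal : ℂ) with hm
  set a : ℂ := ∫ x, Complex.exp (Complex.I * (φ x : ℂ)) ∂μ with ha
  -- integrability of exp(iφ)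
  have hint : Integrable (fun x => Complex.exp (Complex.I * (φ x : ℂ))) μ := by
    refine (integrable_const (1 : ℝ)).mono' ?_ ?_
    · exact (Complex.measurable_exp.comp
        (measurable_const.mul (Complex.measurable_ofReal.comp hφm))).aestronglyMeasurable
    · filter_upwards with x
      rw [mul_comm, Complex.norm_exp_ofReal_mul_I]
  -- the argument of mittagLeffler equals a - m
  have hsub : (∫ x, (Complex.exp (Complex.I * (φ x : ℂ)) - 1) ∂μ) = a - m := by
    rw [integral_sub hint (integrable_const 1), integral_const]
    simp [hm, ha, Complex.real_smul]
    rfl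
  -- factorization of the product integral
  have hprod : ∀ n : ℕ,
      (∫ x : Fin n → M, Complex.exp (Complex.I * ∑ k, (φ (x k) : ℂ))
        ∂(Measure.pi fun _ : Fin n => μ)) = a ^ n := by
    intro n
    letI : MeasureSpace M := ⟨μ⟩
    have hvol : (volume : Measure (Fin n → M)) = Measure.pi fun _ : Fin n => μ := rfl
    have hsplit : ∀ x : Fin n → M,
        Complex.exp (Complex.I * ∑ k, (φ (x k) : ℂ)) =
          ∏ k, Complex.exp (Complex.I * (φ (x k) : ℂ)) := by
      intro x
      rw [Finset.mul_sum, Complex.exp_sum]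
    rw [← hvol]
    calc (∫ x : Fin n → M, Complex.exp (Complex.I * ∑ k, (φ (x k) : ℂ)))
        = ∫ x : Fin n → M, ∏ k, Complex.exp (Complex.I * (φ (x k) : ℂ)) := by
          simp_rw [hsplit]
      _ = (∫ x : M, Complex.exp (Complex.I * (φ x : ℂ))) ^ (Fintype.card (Fin n)) :=
          MeasureTheory.integral_fintype_prod_eq_pow (ι := Fin n)
            (fun y : M => Complex.exp (Complex.I * (φ y : ℂ)))
      _ = a ^ n := by rw [Fintype.card_fin]; rfl
  -- Taylor series of the entire function mittagLeffler α
  have hd : Differentiable ℂ (mittagLeffler α) := ml_differentiable hα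
  have key := Complex.hasSum_taylorSeries_of_entire hd (-m) (a - m)
  have harg : a - m - (-m) = a := by ring
  rw [harg] at key
  rw [hsub]
  refine key.congr_fun fun n => ?_
  rw [hprod n]
  rw [smul_eq_mul, smul_eq_mul]
  ring
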